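/- Let E be a topological space; let g₀ ∈ C_B((0,∞)) separate and strongly separate points on (0,∞); and let M = {1} ∪ {g_i}_{i=2}^N ⊆ C_B(E) (N ∈ ℕ ∪ {∞}) be countable, separate points, strongly separate points, and be closed under multiplication. Let 𝔚_{g₀}[M] = { μ ↦ ∫_E g d(μ/μ(E)) : g ∈ M, g ≠ 1 } ∪ { μ ↦ g₀(μ(E)) } on M⁺(E), the nonzero finite Borel measures on E with the weak topology. Then: (1) M⁺(E) is metrizable; (2) 𝔚_{g₀}[M] consists of bounded continuous real-valued functions on M⁺(E); (3) 𝔚_{g₀}[M] determines sequential point convergence on M⁺(E) (if every functional in 𝔚_{g₀}[M] converges along a sequence (μ_n) to its value at μ, then μ_n ⇒ μ); (4) 𝔚_{g₀}[M] separates and strongly separates points on M⁺(E); and (5) the evaluation map μ ↦ (F(μ))_{F ∈ 𝔚_{g₀}[M]} is a homeomorphism of M⁺(E) onto its image in ℝ^{𝔚_{g₀}[M]}. -/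

import Mathlib

open Set Filter Topology MeasureTheory
open scoped ENNReal NNReal

/-- `D` separates points on the subset `A ⊆ X`. -/
def SepPtsOn {X : Type*} (D : Set (X → ℝ)) (A : Set X) : Prop :=
  ∀ x ∈ A, ∀ y ∈ A, x ≠ y → ∃ f ∈ D, f x ≠ f y

/-- `D` strongly separates points on the subset `A ⊆ X` (subspace topology). -/
def SSepPtsOn {X : Type*} [TopologicalSpace X] (D : Set (X → ℝ)) (A : Set X) : Prop :=
  ∀ x ∈ A, ∀ O : Set X, IsOpen O → x ∈ O →
    ∃ (k : ℕ) (f : Fin k → X → ℝ), (∀ i, f i ∈ D) ∧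
      ∃ ε > (0 : ℝ), ∀ y ∈ A \ O, ∃ i, ε ≤ |f i y - f i x|

/-- A family `D` of real-valued functions separates points on `X`. -/
def SepPts {X : Type*} (D : Set (X → ℝ)) : Prop :=
  ∀ x y : X, x ≠ y → ∃ g ∈ D, g x ≠ g y

/-- A family `M` strongly separates points on the topological space `X`. -/
def SSepPts {X : Type*} [TopologicalSpace X] (M : Set (X → ℝ)) : Prop :=
  ∀ (x : X) (O : Set X), IsOpen O → x ∈ O →
    ∃ (k : ℕ) (g : Fin k → X → ℝ), (∀ i, g i ∈ M) ∧
      ∃ ε > (0 : ℝ), ∀ y, y ∉ O → ∃ i, ε ≤ |g i y - g i x|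

/-- The nonzero finite Borel measures on `E`. -/
abbrev Mplus (E : Type*) [MeasurableSpace E] : Type _ :=
  {μ : Measure E // IsFiniteMeasure μ ∧ μ ≠ 0}

/-- The weak topology on `M⁺(E)`. -/
noncomputable instance MplusTop (E : Type*) [TopologicalSpace E] [MeasurableSpace E] :
    TopologicalSpace (Mplus E) :=
  ⨅ f : BoundedContinuousFunction E ℝ,
    TopologicalSpace.induced (fun μ : Mplus E => ∫ x, f x ∂(μ.1)) inferInstance

/-- The normalization `μ/μ(E)` of a nonzero finite measure. -/
noncomputable def nrm {E : Type*} [MeasurableSpace E] (μ : Mplus E) : Measure E :=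
  (μ.1 Set.univ)⁻¹ • μ.1

/-- The functionals `𝔚_{g₀}[M]` on `M⁺(E)`:
`{ μ ↦ ∫ g d(μ/μ(E)) : g ∈ M, g ≠ 1 } ∪ { μ ↦ g₀(μ(E)) }`. -/
noncomputable def Wfun' {E : Type*} [TopologicalSpace E] [MeasurableSpace E]
    (g₀ : ℝ → ℝ) (D : Set (E → ℝ)) : Set (Mplus E → ℝ) :=
  { F | (∃ g ∈ D, g ≠ (fun _ => (1 : ℝ)) ∧ F = fun μ => ∫ x, g x ∂(nrm μ)) ∨
        F = fun μ => g₀ ((μ.1 Set.univ).toReal) }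

section TopAux

variable {X : Type*} [tX : TopologicalSpace X] {D : Set (X → ℝ)}

lemma isInducing_eval_of_ssp (hcont : ∀ f ∈ D, Continuous f) (h : SSepPts D) :
    IsInducing (fun x => (fun F : D => F.1 x)) := by
  refine ⟨le_antisymm (continuous_iff_le_induced.mp
    (continuous_pi fun F => hcont F.1 F.2)) ?_⟩
  intro U hU
  rw [@isOpen_iff_mem_nhds _ (TopologicalSpace.induced _ _) _]
  intro x hx
  rw [@nhds_induced]
  obtain ⟨k, g, hg, ε, hε, hy⟩ := h x U hU hx
  refine Filter.mem_comap.mpr ⟨⋂ i : Fin k,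
    (fun u : D → ℝ => u ⟨g i, hg i⟩) ⁻¹' Metric.ball (g i x) ε, ?_, ?_⟩
  · exact Filter.iInter_mem.mpr fun i =>
      ((Metric.isOpen_ball).preimage (continuous_apply (⟨g i, hg i⟩ : D))).mem_nhds
        (Set.mem_preimage.mpr (Metric.mem_ball_self hε))
  · intro y hyS
    by_contra hyU
    obtain ⟨i, hi⟩ := hy y hyU
    have := Set.mem_iInter.mp hyS i
    rw [Set.mem_preimage, Metric.mem_ball, Real.dist_eq] at this
    exact absurd (lt_of_le_of_lt hi this) (lt_irrefl _)

lemma ssp_of_isInducing (h : IsInducing (fun x => (fun F : D => F.1 x))) :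
    SSepPts D := by
  intro x O hO hxO
  have hmem : O ∈ 𝓝 x := hO.mem_nhds hxO
  rw [h.nhds_eq_comap, Filter.mem_comap] at hmem
  obtain ⟨S, hS, hsub⟩ := hmem
  rw [nhds_pi, Filter.mem_pi] at hS
  obtain ⟨I, hIfin, V, hV, hVS⟩ := hS
  choose δ hδpos hδsub using fun F : D => Metric.mem_nhds_iff.mp (hV F)
  rcases I.eq_empty_or_nonempty with hIe | hIne
  · refine ⟨0, fun i => i.elim0, fun i => i.elim0, 1, one_pos, fun y hyO => ?_⟩
    exact absurd (hsub (hVS (by simp [hIe, Set.pi]))) hyO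
  · classical
    let J : Finset D := hIfin.toFinset
    have hJne : J.Nonempty := by
      simpa [J, Set.Finite.toFinset] using hIne
    refine ⟨J.card, fun i => ((J.equivFin.symm i : D) : X → ℝ),
      fun i => (J.equivFin.symm i : D).2, J.inf' hJne δ, ?_, ?_⟩
    · exact (Finset.lt_inf'_iff hJne).mpr fun F _ => hδpos F
    · intro y hyO
      by_contra hcon
      push_neg at hcon
      apply hyO
      apply hsub
      apply hVS
      intro F hFI
      have hFJ : F ∈ J := hIfin.mem_toFinset.mpr hFI
      have := hcon (J.equivFin ⟨F, hFJ⟩)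
      simp only [Equiv.symm_apply_apply] at this
      apply hδsub F
      rw [Metric.mem_ball, Real.dist_eq]
      exact lt_of_lt_of_le this (Finset.inf'_le _ hFJ)

lemma isInducing_eval_of_seq (hcount : D.Countable) (hcont : ∀ f ∈ D, Continuous f)
    (hdet : ∀ (u : ℕ → X) (x : X),
      (∀ f ∈ D, Tendsto (fun n => f (u n)) atTop (𝓝 (f x))) → Tendsto u atTop (𝓝 x)) :
    IsInducing (fun x => (fun F : D => F.1 x)) := by
  have : Countable D := hcount.to_subtype
  set e : X → (D → ℝ) := fun x => (fun F : D => F.1 x) with he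
  have hecont : Continuous e := continuous_pi fun F => hcont F.1 F.2
  refine ⟨le_antisymm (continuous_iff_le_induced.mp hecont) ?_⟩
  set t2 : TopologicalSpace X := TopologicalSpace.induced e inferInstance with ht2
  have hfc : @FirstCountableTopology X t2 :=
    TopologicalSpace.firstCountableTopology_induced X (D → ℝ) e
  have hseq : @SequentialSpace X t2 :=
    @FrechetUrysohnSpace.to_sequentialSpace X t2
      (@FirstCountableTopology.frechetUrysohnSpace X t2 hfc)
  intro U hU
  have hclosed : @IsClosed X t2 Uᶜ := by
    rw [← @isSeqClosed_iff_isClosed X t2 hseq]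
    intro u p hu hup
    have hFt : ∀ f ∈ D, Tendsto (fun n => f (u n)) atTop (𝓝 (f p)) := by
      intro f hf
      have hfc2 : Continuous[t2, _] f := by
        have hfe : f = (fun v : D → ℝ => v ⟨f, hf⟩) ∘ e := rfl
        rw [hfe]
        exact (continuous_apply _).comp continuous_induced_dom
      exact (hfc2.tendsto p).comp hup
    have htX := hdet u p hFt
    by_contra hpU
    rw [Set.notMem_compl_iff] at hpU
    have hev : ∀ᶠ n in atTop, u n ∈ U := htX (@IsOpen.mem_nhds X tX p U hU hpU)
    obtain ⟨n, hn⟩ := hev.exists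
    exact hu n hn
  exact (@isClosed_compl_iff X t2 U).mp hclosed
end TopAux

section MplusAux
variable {E : Type*} [TopologicalSpace E] [MeasurableSpace E]

lemma mplus_nhds (μ : Mplus E) : 𝓝 μ = ⨅ f : BoundedContinuousFunction E ℝ,
    Filter.comap (fun ν : Mplus E => ∫ x, f x ∂ν.1) (𝓝 (∫ x, f x ∂μ.1)) := by
  have h := @nhds_iInf (Mplus E) (BoundedContinuousFunction E ℝ)
    (fun f => TopologicalSpace.induced (fun ν : Mplus E => ∫ x, f x ∂ν.1) inferInstance) μ
  rw [show (MplusTop E) = ⨅ f : BoundedContinuousFunction E ℝ,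
    TopologicalSpace.induced (fun ν : Mplus E => ∫ x, f x ∂ν.1) inferInstance from rfl, h]
  exact iInf_congr fun f => nhds_induced _ _

lemma mplus_tendsto_iff {ι : Type*} {l : Filter ι} {μs : ι → Mplus E} {μ : Mplus E} :
    Tendsto μs l (𝓝 μ) ↔ ∀ f : BoundedContinuousFunction E ℝ,
      Tendsto (fun i => ∫ x, f x ∂(μs i).1) l (𝓝 (∫ x, f x ∂μ.1)) := by
  rw [mplus_nhds, tendsto_iInf]
  exact forall_congr' fun f => tendsto_comap_iff

/-- total mass as a real number -/
noncomputable def massR (μ : Mplus E) : ℝ := (μ.1 Set.univ).toReal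

lemma massR_pos (μ : Mplus E) : 0 < massR μ := by
  have : IsFiniteMeasure μ.1 := μ.2.1
  exact ENNReal.toReal_pos (by simpa [Measure.measure_univ_eq_zero] using μ.2.2)
    (measure_ne_top _ _)

instance nrm_isProbability (μ : Mplus E) : IsProbabilityMeasure (nrm μ) := by
  have : IsFiniteMeasure μ.1 := μ.2.1
  constructor
  rw [nrm, Measure.smul_apply, smul_eq_mul, ENNReal.inv_mul_cancel
    (by simpa [Measure.measure_univ_eq_zero] using μ.2.2) (measure_ne_top _ _)]

lemma integral_nrm (μ : Mplus E) (f : E → ℝ) :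
    ∫ x, f x ∂(nrm μ) = (massR μ)⁻¹ * ∫ x, f x ∂μ.1 := by
  rw [nrm, integral_smul_measure, ENNReal.toReal_inv, smul_eq_mul, massR]

lemma integral_eq_massR_mul (μ : Mplus E) (f : E → ℝ) :
    ∫ x, f x ∂μ.1 = massR μ * ∫ x, f x ∂(nrm μ) := by
  rw [integral_nrm, ← mul_assoc, mul_inv_cancel₀ (massR_pos μ).ne', one_mul]

lemma mplus_continuous_integral (f : BoundedContinuousFunction E ℝ) :
    Continuous (fun ν : Mplus E => ∫ x, f x ∂ν.1) := by
  rw [continuous_iff_continuousAt]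
  intro μ
  exact mplus_tendsto_iff.mp tendsto_id f

lemma mplus_continuous_massR : Continuous (massR (E := E)) := by
  have h := mplus_continuous_integral (BoundedContinuousFunction.const E (1 : ℝ))
  exact (by simpa [integral_const, smul_eq_mul, measureReal_def] using h :
    Continuous fun ν : Mplus E => (ν.1 Set.univ).toReal)

lemma mplus_continuous_nrm_integral (f : BoundedContinuousFunction E ℝ) :
    Continuous (fun ν : Mplus E => ∫ x, f x ∂(nrm ν)) := by
  simp only [integral_nrm]
  exact (mplus_continuous_massR.inv₀ fun ν => (massR_pos ν).ne').mul
    (mplus_continuous_integral f)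

end MplusAux

section W
variable {E : Type*} [TopologicalSpace E] [MeasurableSpace E]

/-- a member of `M` as a bounded continuous function -/
noncomputable def toBCF (g : E → ℝ) (hc : Continuous g) (C : ℝ) (hb : ∀ x, |g x| ≤ C) :
    BoundedContinuousFunction E ℝ :=
  BoundedContinuousFunction.ofNormedAddCommGroup g hc C (by simpa [Real.norm_eq_abs] using hb)

lemma wfun_cont_bdd (g₀ : ℝ → ℝ)
    (hg₀c : ContinuousOn g₀ (Set.Ioi 0)) (hg₀b : ∃ C, ∀ x ∈ Set.Ioi (0:ℝ), |g₀ x| ≤ C)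
    (M : Set (E → ℝ)) (hMc : ∀ f ∈ M, Continuous f) (hMb : ∀ f ∈ M, ∃ C, ∀ x, |f x| ≤ C) :
    ∀ F ∈ Wfun' g₀ M, Continuous F ∧ ∃ C, ∀ μ : Mplus E, |F μ| ≤ C := by
  rintro F (⟨g, hg, -, rfl⟩ | rfl)
  · obtain ⟨C, hC⟩ := hMb g hg
    constructor
    · exact mplus_continuous_nrm_integral (toBCF g (hMc g hg) C hC)
    · refine ⟨C, fun μ => ?_⟩
      have : IsProbabilityMeasure (nrm μ) := inferInstance
      have h := norm_integral_le_of_norm_le_const (μ := nrm μ) (f := g) (C := C)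
        (Filter.Eventually.of_forall (by simpa [Real.norm_eq_abs] using hC))
      simpa [Real.norm_eq_abs, measure_univ] using h
  · constructor
    · have : (fun μ : Mplus E => g₀ ((μ.1 Set.univ).toReal)) = g₀ ∘ massR := rfl
      rw [this]
      exact hg₀c.comp_continuous mplus_continuous_massR fun μ => massR_pos μ
    · obtain ⟨C, hC⟩ := hg₀b
      exact ⟨C, fun μ => hC _ (massR_pos μ)⟩
end W

lemma keyA {E : Type*} [TopologicalSpace E] [MeasurableSpace E] [BorelSpace E]
    (g₀ : ℝ → ℝ) (hg₀ssp : SSepPtsOn {g₀} (Set.Ioi 0))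
    (M : Set (E → ℝ)) (hone : (fun _ => (1 : ℝ)) ∈ M) (hMcount : M.Countable)
    (hMc : ∀ f ∈ M, Continuous f) (hMb : ∀ f ∈ M, ∃ C, ∀ x, |f x| ≤ C)
    (hssp : SSepPts M)
    (hmul : ∀ f ∈ M, ∀ f' ∈ M, (fun x => f x * f' x) ∈ M)
    (μs : ℕ → Mplus E) (μ : Mplus E)
    (h : ∀ F ∈ Wfun' g₀ M, Tendsto (fun n => F (μs n)) atTop (𝓝 (F μ))) :
    ∀ f : BoundedContinuousFunction E ℝ,
      Tendsto (fun n => ∫ x, f x ∂(μs n).1) atTop (𝓝 (∫ x, f x ∂μ.1)) := by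
  classical
  haveI : Countable ↥M := hMcount.to_subtype
  -- Step 1: convergence of total masses
  have hFmass : Tendsto (fun n => g₀ (massR (μs n))) atTop (𝓝 (g₀ (massR μ))) :=
    h _ (Or.inr rfl)
  have hmass : Tendsto (fun n => massR (μs n)) atTop (𝓝 (massR μ)) := by
    rw [(nhds_basis_opens (massR μ)).tendsto_right_iff]
    rintro O ⟨hmem, hO⟩
    obtain ⟨k, f, hf, ε, hε, hy⟩ := hg₀ssp (massR μ) (massR_pos μ) O hO hmem
    have hev : ∀ᶠ n in atTop, |g₀ (massR (μs n)) - g₀ (massR μ)| < ε := by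
      have := hFmass (Metric.ball_mem_nhds _ hε)
      simpa [Real.dist_eq] using this
    filter_upwards [hev] with n hn
    by_contra hnot
    obtain ⟨i, hi⟩ := hy (massR (μs n)) ⟨massR_pos (μs n), hnot⟩
    rw [Set.eq_of_mem_singleton (hf i)] at hi
    exact absurd (lt_of_le_of_lt hi hn) (lt_irrefl _)
  -- Step 2: convergence of normalized integrals of members of M
  have hM : ∀ g ∈ M, Tendsto (fun n => ∫ x, g x ∂(nrm (μs n))) atTop
      (𝓝 (∫ x, g x ∂(nrm μ))) := by
    intro g hg
    by_cases hg1 : g = fun _ => (1 : ℝ)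
    · subst hg1
      simp only [integral_const, probReal_univ, smul_eq_mul, one_mul]
      exact tendsto_const_nhds
    · exact h _ (Or.inl ⟨g, hg, hg1, rfl⟩)
  -- Step 3: the compactification
  set C : ↥M → ℝ := fun g => Classical.choose (hMb g.1 g.2) with hCdef
  have hC : ∀ (g : ↥M) (x : E), |g.1 x| ≤ C g := fun g => Classical.choose_spec (hMb g.1 g.2)
  let K := ∀ g : ↥M, (Set.Icc (-(C g)) (C g) : Set ℝ)
  let e : E → K := fun x g => ⟨g.1 x, by
    rcases abs_le.mp (hC g x) with ⟨h1, h2⟩; exact ⟨h1, h2⟩⟩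
  have he_cont : Continuous e := continuous_pi fun g => ((hMc g.1 g.2).subtype_mk _)
  have he_meas : Measurable e := he_cont.measurable
  have he₀ : IsInducing (fun x => (fun F : ↥M => F.1 x)) :=
    isInducing_eval_of_ssp hMc hssp
  have he_ind : IsInducing e := by
    refine IsInducing.of_comp he_cont
      (continuous_pi fun g : ↥M => (continuous_apply g).subtype_val) ?_
    exact he₀
  haveI hE2 : SecondCountableTopology E := he₀.secondCountableTopology
  haveI hEpm : TopologicalSpace.PseudoMetrizableSpace E := he₀.pseudoMetrizableSpace
  -- probability measures and pushforwards
  haveI hmapP : ∀ ν : Mplus E, IsProbabilityMeasure (Measure.map e (nrm ν)) :=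
    fun ν => Measure.isProbabilityMeasure_map he_meas.aemeasurable
  let P : ℕ → ProbabilityMeasure E := fun n => ⟨nrm (μs n), inferInstance⟩
  let Pl : ProbabilityMeasure E := ⟨nrm μ, inferInstance⟩
  let Q : ℕ → ProbabilityMeasure K := fun n => ⟨Measure.map e (nrm (μs n)), hmapP _⟩
  let Ql : ProbabilityMeasure K := ⟨Measure.map e (nrm μ), hmapP _⟩
  -- Stone-Weierstrass setup
  let π : ↥M → C(K, ℝ) := fun g => ⟨fun u => (u g).1, (continuous_apply g).subtype_val⟩
  let A : Subalgebra ℝ C(K, ℝ) := Algebra.adjoin ℝ (Set.range π)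
  have hAsep : A.SeparatesPoints := by
    intro u v huv
    obtain ⟨g, hg⟩ := Function.ne_iff.mp huv
    refine ⟨π g, ⟨π g, Algebra.subset_adjoin (Set.mem_range_self g), rfl⟩, ?_⟩
    exact fun hc => hg (Subtype.ext hc)
  have hmono : ∀ m ∈ Submonoid.closure (Set.range π), ∃ g ∈ M, ∀ x : E, m (e x) = g x := by
    intro m hm
    induction hm using Submonoid.closure_induction with
    | mem f hf =>
      obtain ⟨g, rfl⟩ := hf
      exact ⟨g.1, g.2, fun x => rfl⟩
    | one => exact ⟨fun _ => 1, hone, fun x => rfl⟩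
    | mul a b ha hb iha ihb =>
      obtain ⟨ga, hga, hae⟩ := iha
      obtain ⟨gb, hgb, hbe⟩ := ihb
      exact ⟨fun x => ga x * gb x, hmul _ hga _ hgb,
        fun x => by simp [ContinuousMap.mul_apply, hae x, hbe x]⟩
  have hIntMap : ∀ (c : C(K, ℝ)) (ν : Mplus E), Integrable c (Measure.map e (nrm ν)) := by
    intro c ν
    have := (BoundedContinuousFunction.mkOfCompact c).integrable (μ := Measure.map e (nrm ν))
    exact this
  -- integrals of elements of the subalgebra converge
  have hspan : ∀ a : C(K, ℝ), a ∈ A →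
      Tendsto (fun n => ∫ u, a u ∂(Measure.map e (nrm (μs n)))) atTop
        (𝓝 (∫ u, a u ∂(Measure.map e (nrm μ)))) := by
    intro a ha
    have ha' : a ∈ Submodule.span ℝ ((Submonoid.closure (Set.range π) : Submonoid C(K, ℝ)) :
        Set C(K, ℝ)) := by
      have := Algebra.adjoin_eq_span (R := ℝ) (s := Set.range π)
      rw [← Subalgebra.mem_toSubmodule, this] at ha
      exact ha
    clear ha
    induction ha' using Submodule.span_induction with
    | mem m hm =>
      obtain ⟨g, hg, hge⟩ := hmono m hm
      have key : ∀ ν : Mplus E, ∫ u, m u ∂(Measure.map e (nrm ν)) = ∫ x, g x ∂(nrm ν) := by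
        intro ν
        rw [integral_map he_meas.aemeasurable m.continuous.aestronglyMeasurable]
        exact integral_congr_ae (Filter.Eventually.of_forall fun x => hge x)
      simp_rw [key]
      exact hM g hg
    | zero => simpa using tendsto_const_nhds
    | add a b ha hb iha ihb =>
      have key : ∀ ν : Mplus E, ∫ u, (a + b) u ∂(Measure.map e (nrm ν)) =
          (∫ u, a u ∂(Measure.map e (nrm ν))) + ∫ u, b u ∂(Measure.map e (nrm ν)) := by
        intro ν
        simp only [ContinuousMap.add_apply]
        exact integral_add (hIntMap a ν) (hIntMap b ν)
      simp_rw [key]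
      exact iha.add ihb
    | smul c a ha iha =>
      have key : ∀ ν : Mplus E, ∫ u, (c • a) u ∂(Measure.map e (nrm ν)) =
          c * ∫ u, a u ∂(Measure.map e (nrm ν)) := by
        intro ν
        simp only [ContinuousMap.smul_apply, smul_eq_mul]
        exact integral_const_mul c _
      simp_rw [key]
      exact iha.const_mul c
  -- all bounded continuous functions on K
  have hall : ∀ f : BoundedContinuousFunction K ℝ,
      Tendsto (fun n => ∫ u, f u ∂(Measure.map e (nrm (μs n)))) atTop
        (𝓝 (∫ u, f u ∂(Measure.map e (nrm μ)))) := by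
    intro f
    rw [Metric.tendsto_atTop]
    intro ε hε
    obtain ⟨a, ha⟩ := ContinuousMap.exists_mem_subalgebra_near_continuous_of_separatesPoints
      A hAsep f f.continuous (ε/4) (by linarith)
    have hconv := hspan a a.2
    rw [Metric.tendsto_atTop] at hconv
    obtain ⟨N, hN⟩ := hconv (ε/4) (by linarith)
    refine ⟨N, fun n hn => ?_⟩
    have hb : ∀ ν : Mplus E, dist (∫ u, f u ∂(Measure.map e (nrm ν)))
        (∫ u, (a : C(K, ℝ)) u ∂(Measure.map e (nrm ν))) ≤ ε/4 := by
      intro ν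
      rw [Real.dist_eq, ← integral_sub
        (by
          have hint := (BoundedContinuousFunction.mkOfCompact f.toContinuousMap).integrable
            (μ := Measure.map e (nrm ν))
          exact hint)
        (hIntMap a ν)]
      have hbd := norm_integral_le_of_norm_le_const (μ := Measure.map e (nrm ν))
        (f := fun u => f u - (a : C(K, ℝ)) u) (C := ε/4)
        (Filter.Eventually.of_forall fun u => by
          have := le_of_lt (ha u)
          rw [norm_sub_rev] at this
          simpa using this)
      simpa [Real.norm_eq_abs, measure_univ] using hbd
    calc dist (∫ u, f u ∂(Measure.map e (nrm (μs n)))) (∫ u, f u ∂(Measure.map e (nrm μ)))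
        ≤ dist (∫ u, f u ∂(Measure.map e (nrm (μs n))))
            (∫ u, (a : C(K, ℝ)) u ∂(Measure.map e (nrm (μs n)))) +
          dist (∫ u, (a : C(K, ℝ)) u ∂(Measure.map e (nrm (μs n))))
            (∫ u, (a : C(K, ℝ)) u ∂(Measure.map e (nrm μ))) +
          dist (∫ u, (a : C(K, ℝ)) u ∂(Measure.map e (nrm μ)))
            (∫ u, f u ∂(Measure.map e (nrm μ))) := dist_triangle4 _ _ _ _
      _ ≤ ε/4 + (ε/4) + (ε/4) := by
          refine add_le_add (add_le_add (hb _) (le_of_lt (hN n hn))) ?_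
          rw [dist_comm]; exact hb μ
      _ < ε := by linarith
  have htendK : Tendsto Q atTop (𝓝 Ql) :=
    ProbabilityMeasure.tendsto_iff_forall_integral_tendsto.mpr (fun f => hall f)
  -- portmanteau transfer to E
  have hopens : ∀ G, IsOpen G → Pl G ≤ atTop.liminf (fun n => P n G) := by
    intro G hG
    obtain ⟨V, hV, hVG⟩ := he_ind.isOpen_iff.mp hG
    haveI : ∀ n, IsProbabilityMeasure ((Q n : Measure K)) := fun n => (Q n).2
    have hlim : (Measure.map e (nrm μ)) V ≤
        atTop.liminf (fun n => (Measure.map e (nrm (μs n))) V) :=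
      le_measure_liminf_of_limsup_measure_compl_le (μ := (Ql : Measure K))
        (μs := fun n => (Q n : Measure K)) hV.measurableSet
        (ProbabilityMeasure.limsup_measure_closed_le_of_tendsto htendK hV.isClosed_compl)
    rw [Measure.map_apply he_meas hV.measurableSet] at hlim
    simp_rw [Measure.map_apply he_meas hV.measurableSet] at hlim
    rw [hVG] at hlim
    have aux : (↑(atTop.liminf (fun n => P n G)) : ℝ≥0∞) =
        atTop.liminf (fun n => ((P n G : ℝ≥0∞))) := by
      refine Monotone.map_liminf_of_continuousAt (F := atTop) ENNReal.coe_mono (fun n => P n G)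
        ENNReal.continuous_coe.continuousAt ?_ ?_
      · exact IsBoundedUnder.isCoboundedUnder_ge ⟨1, by simp⟩
      · exact ⟨0, by simp⟩
    rw [← ENNReal.coe_le_coe, aux]
    simp only [ProbabilityMeasure.ennreal_coeFn_eq_coeFn_toMeasure]
    exact hlim
  have hfin : Tendsto P atTop (𝓝 Pl) := tendsto_of_forall_isOpen_le_liminf hopens
  have hnrm := ProbabilityMeasure.tendsto_iff_forall_integral_tendsto.mp hfin
  intro f
  have h1 : Tendsto (fun n => massR (μs n) * ∫ x, f x ∂(nrm (μs n))) atTop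
      (𝓝 (massR μ * ∫ x, f x ∂(nrm μ))) := hmass.mul (hnrm f)
  simpa [← integral_eq_massR_mul] using h1


theorem stmt19 {E : Type*} [TopologicalSpace E] [MeasurableSpace E] [BorelSpace E]
    (g₀ : ℝ → ℝ)
    (hg₀c : ContinuousOn g₀ (Set.Ioi 0)) (hg₀b : ∃ C, ∀ x ∈ Set.Ioi (0:ℝ), |g₀ x| ≤ C)
    (hg₀sep : SepPtsOn {g₀} (Set.Ioi 0)) (hg₀ssp : SSepPtsOn {g₀} (Set.Ioi 0))
    (M : Set (E → ℝ)) (hone : (fun _ => (1 : ℝ)) ∈ M) (hMcount : M.Countable)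
    (hMc : ∀ f ∈ M, Continuous f) (hMb : ∀ f ∈ M, ∃ C, ∀ x, |f x| ≤ C)
    (hsep : SepPts M) (hssp : SSepPts M)
    (hmul : ∀ f ∈ M, ∀ f' ∈ M, (fun x => f x * f' x) ∈ M) :
    TopologicalSpace.MetrizableSpace (Mplus E) ∧
    (∀ F ∈ Wfun' g₀ M, Continuous F ∧ ∃ C, ∀ μ : Mplus E, |F μ| ≤ C) ∧
    (∀ (μs : ℕ → Mplus E) (μ : Mplus E),
      (∀ F ∈ Wfun' g₀ M,
        Filter.Tendsto (fun n => F (μs n)) Filter.atTop (𝓝 (F μ))) →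
      Filter.Tendsto μs Filter.atTop (𝓝 μ)) ∧
    (SepPts (Wfun' g₀ M) ∧ SSepPts (Wfun' g₀ M)) ∧
    IsEmbedding (fun (μ : Mplus E) (F : Wfun' g₀ M) => (F : Mplus E → ℝ) μ) := by
  classical
  haveI : Countable ↥M := hMcount.to_subtype
  have he₀ : IsInducing (fun x => (fun F : ↥M => F.1 x)) := isInducing_eval_of_ssp hMc hssp
  haveI hE2 : SecondCountableTopology E := he₀.secondCountableTopology
  haveI hEpm : TopologicalSpace.PseudoMetrizableSpace E := he₀.pseudoMetrizableSpace
  have part2 := wfun_cont_bdd g₀ hg₀c hg₀b M hMc hMb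
  have key := keyA g₀ hg₀ssp M hone hMcount hMc hMb hssp hmul
  have part3 : ∀ (μs : ℕ → Mplus E) (μ : Mplus E),
      (∀ F ∈ Wfun' g₀ M, Tendsto (fun n => F (μs n)) atTop (𝓝 (F μ))) →
      Tendsto μs atTop (𝓝 μ) := fun μs μ hFs => mplus_tendsto_iff.mpr (key μs μ hFs)
  have hWc : (Wfun' g₀ M).Countable := by
    refine Set.Countable.mono ?_
      (((hMcount.image (fun g => fun ν : Mplus E => ∫ x, g x ∂(nrm ν)))).insert
        (fun ν : Mplus E => g₀ ((ν.1 Set.univ).toReal)))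
    rintro F (⟨g, hg, -, rfl⟩ | rfl)
    · exact Set.mem_insert_of_mem _ ⟨g, hg, rfl⟩
    · exact Set.mem_insert _ _
  have hind : IsInducing (fun μ : Mplus E => (fun F : ↥(Wfun' g₀ M) => F.1 μ)) :=
    isInducing_eval_of_seq hWc (fun F hF => (part2 F hF).1) part3
  have hinj : Function.Injective
      (fun μ : Mplus E => (fun F : ↥(Wfun' g₀ M) => F.1 μ)) := by
    intro ν μ hμν
    have hFeq : ∀ F ∈ Wfun' g₀ M, F ν = F μ := fun F hF => congrFun hμν ⟨F, hF⟩
    have hconst : ∀ F ∈ Wfun' g₀ M, Tendsto (fun _ : ℕ => F ν) atTop (𝓝 (F μ)) := by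
      intro F hF; rw [← hFeq F hF]; exact tendsto_const_nhds
    have hint : ∀ f : BoundedContinuousFunction E ℝ, ∫ x, f x ∂ν.1 = ∫ x, f x ∂μ.1 :=
      fun f => tendsto_nhds_unique tendsto_const_nhds (key (fun _ => ν) μ hconst f)
    haveI : IsFiniteMeasure ν.1 := ν.2.1
    haveI : IsFiniteMeasure μ.1 := μ.2.1
    apply Subtype.ext
    apply ext_of_forall_lintegral_eq_of_IsFiniteMeasure
    intro f
    have hb : ∀ x, |((f x : ℝ))| ≤ dist f 0 := by
      intro x
      have hd := BoundedContinuousFunction.dist_coe_le_dist (f := f) (g := 0) x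
      simpa [NNReal.dist_eq] using hd
    have hreal := hint (toBCF (fun x => ((f x : ℝ)))
      (NNReal.continuous_coe.comp f.continuous) (dist f 0) hb)
    have h1 := BoundedContinuousFunction.toReal_lintegral_coe_eq_integral f ν.1
    have h2 := BoundedContinuousFunction.toReal_lintegral_coe_eq_integral f μ.1
    rw [← ENNReal.toReal_eq_toReal_iff' (f.lintegral_lt_top_of_nnreal (μ := ν.1)).ne
      (f.lintegral_lt_top_of_nnreal (μ := μ.1)).ne, h1, h2]
    simpa [toBCF] using hreal
  have part5 : IsEmbedding (fun (μ : Mplus E) (F : Wfun' g₀ M) => (F : Mplus E → ℝ) μ) :=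
    ⟨hind, hinj⟩
  have part1 : TopologicalSpace.MetrizableSpace (Mplus E) := by
    haveI : Countable ↥(Wfun' g₀ M) := hWc.to_subtype
    exact part5.metrizableSpace
  have part4a : SepPts (Wfun' g₀ M) := by
    intro x y hne
    by_contra hno
    push_neg at hno
    exact hne (hinj (funext fun F => hno F.1 F.2))
  exact ⟨part1, part2, part3, ⟨part4a, ssp_of_isInducing hind⟩, part5⟩
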